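/- For any positive sequence (ε_l)_{l≥1}, every iteration k satisfies f(x^{k+1}) ≤ f(x^k) + (L/2)·Σ_{l=1}^{∞} ε_l‖Δ^{k−l}‖₂² + (L/2)·(1 + Σ_{l=1}^{j(k)} 1/ε_l − 2/γ_k)·‖Δ^k‖₂². -/

import Mathlib

open MeasureTheory Filter
open scoped BigOperators RealInnerProductSpace

section aux
variable {F : Type*} [NormedAddCommGroup F] [InnerProductSpace ℝ F] [CompleteSpace F]

lemma fderiv_eq_inner_gradient (f : F → ℝ) (y v : F) :
    fderiv ℝ f y v = ⟪gradient f y, v⟫ := by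
  rw [gradient, ← InnerProductSpace.toDual_apply_apply, LinearIsometryEquiv.apply_symm_apply]

lemma descent_lemma (f : F → ℝ) (hdiff : Differentiable ℝ f) (L : ℝ)
    (hlip : ∀ y z, ‖gradient f y - gradient f z‖ ≤ L * ‖y - z‖) (a b : F) :
    f b ≤ f a + ⟪gradient f a, b - a⟫ + L / 2 * ‖b - a‖ ^ 2 := by
  set v := b - a with hv
  set g : ℝ → ℝ := fun t => f (a + t • v) - t * ⟪gradient f a, v⟫ - L / 2 * t ^ 2 * ‖v‖ ^ 2
    with hg
  have hline : ∀ t : ℝ, HasDerivAt (fun t : ℝ => a + t • v) v t := fun t => by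
    simpa using ((hasDerivAt_id t).smul_const v).const_add a
  have hgd : ∀ t : ℝ, HasDerivAt g
      (⟪gradient f (a + t • v), v⟫ - ⟪gradient f a, v⟫ - L * t * ‖v‖ ^ 2) t := by
    intro t
    have h1 : HasDerivAt (fun t : ℝ => f (a + t • v)) (fderiv ℝ f (a + t • v) v) t :=
      (hdiff _).hasFDerivAt.comp_hasDerivAt t (hline t)
    rw [fderiv_eq_inner_gradient] at h1
    have h2 : HasDerivAt (fun t : ℝ => t * ⟪gradient f a, v⟫) ⟪gradient f a, v⟫ t := by
      simpa using (hasDerivAt_id t).mul_const (⟪gradient f a, v⟫)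
    have h3 : HasDerivAt (fun t : ℝ => L / 2 * t ^ 2 * ‖v‖ ^ 2) (L * t * ‖v‖ ^ 2) t := by
      have := ((hasDerivAt_pow 2 t).const_mul (L / 2)).mul_const (‖v‖ ^ 2)
      refine this.congr_deriv ?_
      ring
    exact (h1.sub h2).sub h3
  have key : g 1 ≤ g 0 := by
    have cont : ContinuousOn g (Set.Icc 0 1) := fun t _ =>
      ((hgd t).continuousAt).continuousWithinAt
    have hderiv : ∀ t ∈ interior (Set.Icc (0:ℝ) 1), deriv g t ≤ 0 := by
      intro t ht
      rw [interior_Icc] at ht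
      rw [(hgd t).deriv]
      have h1 : ⟪gradient f (a + t • v) - gradient f a, v⟫ ≤ L * t * ‖v‖ ^ 2 := by
        calc ⟪gradient f (a + t • v) - gradient f a, v⟫
            ≤ ‖gradient f (a + t • v) - gradient f a‖ * ‖v‖ := real_inner_le_norm _ _
          _ ≤ (L * ‖(a + t • v) - a‖) * ‖v‖ := by
              apply mul_le_mul_of_nonneg_right (hlip _ _) (norm_nonneg _)
          _ = L * t * ‖v‖ ^ 2 := by
              rw [add_sub_cancel_left, norm_smul, Real.norm_eq_abs, abs_of_pos ht.1]
              ring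
      rw [inner_sub_left] at h1
      linarith
    have := antitoneOn_of_deriv_nonpos (convex_Icc 0 1) cont
      (fun t _ => ((hgd t).differentiableAt).differentiableWithinAt) hderiv
    exact this (Set.left_mem_Icc.mpr zero_le_one) (Set.right_mem_Icc.mpr zero_le_one) zero_le_one
  simp only [hg, zero_smul, add_zero, zero_mul, one_smul, one_mul, one_pow] at key
  have : a + v = b := by rw [hv]; abel
  rw [this] at key
  linarith

lemma coord_le_norm {N : ℕ} (y : EuclideanSpace ℝ (Fin N)) (m : Fin N) : |y m| ≤ ‖y‖ := by
  rw [EuclideanSpace.norm_eq]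
  have h1 : |y m| = Real.sqrt (‖y m‖ ^ 2) := by
    rw [Real.sqrt_sq_eq_abs, Real.norm_eq_abs, abs_abs]
  rw [h1]
  apply Real.sqrt_le_sqrt
  exact Finset.single_le_sum (f := fun j => ‖y j‖ ^ 2) (fun j _ => by positivity)
    (Finset.mem_univ m)

lemma young_ineq (a b e : ℝ) (ha : 0 ≤ a) (hb : 0 ≤ b) (he : 0 < e) :
    a * b ≤ (e * a ^ 2 + 1 / e * b ^ 2) / 2 := by
  rw [le_div_iff₀ (by norm_num : (0:ℝ) < 2), ← sub_nonneg]
  have h : e * a ^ 2 + 1 / e * b ^ 2 - a * b * 2 = (e * a - b) ^ 2 / e := by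
    field_simp
    ring
  rw [h]
  positivity

end aux

theorem descent_general_delays
    (N : ℕ) (hN : 0 < N)
    (f : EuclideanSpace ℝ (Fin N) → ℝ)
    (L : ℝ) (hL : 0 < L)
    (hdiff : Differentiable ℝ f)
    (hlip : ∀ y z : EuclideanSpace ℝ (Fin N), ‖gradient f y - gradient f z‖ ≤ L * ‖y - z‖)
    (fmin : ℝ) (hfmin : ∀ y, fmin ≤ f y)
    (x : ℕ → EuclideanSpace ℝ (Fin N))
    (ik : ℕ → Fin N)
    (jv : ℕ → Fin N → ℕ)
    (hjk : ∀ k i, jv k i ≤ k)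
    (xhat : ℕ → EuclideanSpace ℝ (Fin N))
    (hxhat : ∀ k i, xhat k i = x (k - jv k i) i)
    (γ : ℕ → ℝ) (hγ : ∀ k, 0 < γ k)
    (hupd : ∀ k, x (k+1) (ik k) = x k (ik k) - (γ k / L) * gradient f (xhat k) (ik k))
    (hfix : ∀ k i, i ≠ ik k → x (k+1) i = x k i)
    (ε : ℕ → ℝ) (hε : ∀ l, 1 ≤ l → 0 < ε l) :
    ∀ k : ℕ,
      f (x (k+1)) ≤ f (x k)
        + (L / 2) * ∑ l ∈ Finset.Icc 1 k, ε l * ‖x (k - l + 1) - x (k - l)‖ ^ 2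
        + (L / 2) * (1 + (∑ l ∈ Finset.Icc 1 (Finset.univ.sup (jv k)), 1 / ε l) - 2 / γ k)
            * ‖x (k+1) - x k‖ ^ 2 := by
  intro k
  set i := ik k with hi
  set Δ : EuclideanSpace ℝ (Fin N) := x (k+1) - x k with hΔ
  set gk := gradient f (x k) with hgk
  set hk := gradient f (xhat k) with hhk
  set J := Finset.univ.sup (jv k) with hJ
  have hJk : J ≤ k := Finset.sup_le fun m _ => hjk k m
  -- coordinate facts about Δ
  have hΔ0 : ∀ j : Fin N, j ≠ i → Δ j = 0 := by
    intro j hj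
    rw [hΔ, PiLp.sub_apply, hfix k j hj, sub_self]
  have hinner : ⟪gk, Δ⟫ = gk i * Δ i := by
    rw [PiLp.inner_apply]
    rw [Finset.sum_eq_single i]
    · simp [RCLike.inner_apply]; ring
    · intro j _ hj
      simp [hΔ0 j hj]
    · intro hni
      exact absurd (Finset.mem_univ i) hni
  have hnsq : ‖Δ‖ ^ 2 = Δ i ^ 2 := by
    rw [← real_inner_self_eq_norm_sq, PiLp.inner_apply]
    rw [Finset.sum_eq_single i]
    · simp [RCLike.inner_apply]
    · intro j _ hj
      simp [hΔ0 j hj]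
    · intro hni
      exact absurd (Finset.mem_univ i) hni
  have hΔval : Δ i = -(γ k / L) * hk i := by
    rw [hΔ, PiLp.sub_apply, hupd k]
    ring
  -- the inner product term
  have hhkΔ : hk i * Δ i = -(L / γ k) * ‖Δ‖ ^ 2 := by
    have hγk := hγ k
    have : hk i = -(L / γ k) * Δ i := by
      rw [hΔval]
      field_simp
    rw [this, hnsq]
    ring
  -- telescoping
  have tele : ∀ j : ℕ, j ≤ k → ∀ m : Fin N,
      x k m - x (k - j) m = ∑ l ∈ Finset.Icc 1 j, (x (k - l + 1) m - x (k - l) m) := by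
    intro j
    induction j with
    | zero => intro _ m; simp
    | succ j ih =>
      intro hjk' m
      rw [Finset.sum_Icc_succ_top (by omega), ← ih (by omega) m]
      have e1 : k - (j + 1) + 1 = k - j := by omega
      rw [e1]
      ring
  -- coordinatewise bound on the delay vector
  have hdm : ∀ m : Fin N, |x k m - xhat k m|
      ≤ ∑ l ∈ Finset.Icc 1 J, |x (k - l + 1) m - x (k - l) m| := by
    intro m
    rw [hxhat k m, tele (jv k m) (hjk k m) m]
    calc |∑ l ∈ Finset.Icc 1 (jv k m), (x (k - l + 1) m - x (k - l) m)|
        ≤ ∑ l ∈ Finset.Icc 1 (jv k m), |x (k - l + 1) m - x (k - l) m| :=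
          Finset.abs_sum_le_sum_abs _ _
      _ ≤ ∑ l ∈ Finset.Icc 1 J, |x (k - l + 1) m - x (k - l) m| := by
          apply Finset.sum_le_sum_of_subset_of_nonneg
          · exact Finset.Icc_subset_Icc_right (Finset.le_sup (Finset.mem_univ m))
          · intros; positivity
  -- norm bound on the delay vector
  set u : ℕ → EuclideanSpace ℝ (Fin N) := fun l =>
    (WithLp.equiv 2 _).symm (fun m => |x (k - l + 1) m - x (k - l) m|) with hu
  have hsum_apply : ∀ m : Fin N, (∑ l ∈ Finset.Icc 1 J, u l) m
      = ∑ l ∈ Finset.Icc 1 J, |x (k - l + 1) m - x (k - l) m| := by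
    intro m
    rw [← hu]
    induction (Finset.Icc 1 J) using Finset.induction with
    | empty => simp
    | insert _ _ hnot ih =>
      rw [Finset.sum_insert hnot, Finset.sum_insert hnot, PiLp.add_apply, ih]
      rfl
  have hnu : ∀ l, ‖u l‖ = ‖x (k - l + 1) - x (k - l)‖ := by
    intro l
    rw [EuclideanSpace.norm_eq, EuclideanSpace.norm_eq]
    congr 1
    apply Finset.sum_congr rfl
    intro m _
    rw [hu]
    simp [PiLp.sub_apply, Real.norm_eq_abs, abs_abs, sq_abs]
  have hdnorm : ‖x k - xhat k‖ ≤ ∑ l ∈ Finset.Icc 1 J, ‖x (k - l + 1) - x (k - l)‖ := by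
    calc ‖x k - xhat k‖ ≤ ‖∑ l ∈ Finset.Icc 1 J, u l‖ := by
          rw [EuclideanSpace.norm_eq, EuclideanSpace.norm_eq]
          apply Real.sqrt_le_sqrt
          apply Finset.sum_le_sum
          intro m _
          have h2 : (0:ℝ) ≤ ∑ l ∈ Finset.Icc 1 J, |x (k - l + 1) m - x (k - l) m| := by
            positivity
          rw [hsum_apply m, PiLp.sub_apply, Real.norm_eq_abs, Real.norm_eq_abs,
            abs_of_nonneg h2]
          exact pow_le_pow_left₀ (abs_nonneg _) (hdm m) 2
      _ ≤ ∑ l ∈ Finset.Icc 1 J, ‖u l‖ := norm_sum_le _ _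
      _ = ∑ l ∈ Finset.Icc 1 J, ‖x (k - l + 1) - x (k - l)‖ := by
          exact Finset.sum_congr rfl fun l _ => hnu l
  -- descent lemma
  have hdesc := descent_lemma f hdiff L hlip (x k) (x (k+1))
  rw [← hΔ, ← hgk, hinner] at hdesc
  -- cross term bound
  have hcross : (gk i - hk i) * Δ i ≤ L * ‖x k - xhat k‖ * ‖Δ‖ := by
    calc (gk i - hk i) * Δ i ≤ |(gk - hk) i| * |Δ i| := by
          rw [PiLp.sub_apply, ← abs_mul]
          exact le_abs_self _
      _ ≤ ‖gk - hk‖ * ‖Δ‖ := by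
          have habs : |Δ i| = ‖Δ‖ := by
            rw [← Real.sqrt_sq_eq_abs, ← hnsq, Real.sqrt_sq (norm_nonneg _)]
          exact mul_le_mul (coord_le_norm _ i) habs.le (abs_nonneg _) (norm_nonneg _)
      _ ≤ (L * ‖x k - xhat k‖) * ‖Δ‖ :=
          mul_le_mul_of_nonneg_right (hlip _ _) (norm_nonneg _)
      _ = L * ‖x k - xhat k‖ * ‖Δ‖ := by ring
  -- Young's inequality per term
  have hyoung : ‖x k - xhat k‖ * ‖Δ‖ ≤
      (∑ l ∈ Finset.Icc 1 J, (ε l * ‖x (k - l + 1) - x (k - l)‖ ^ 2 + (1 / ε l) * ‖Δ‖ ^ 2)) / 2 := by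
    calc ‖x k - xhat k‖ * ‖Δ‖
        ≤ (∑ l ∈ Finset.Icc 1 J, ‖x (k - l + 1) - x (k - l)‖) * ‖Δ‖ :=
          mul_le_mul_of_nonneg_right hdnorm (norm_nonneg _)
      _ = ∑ l ∈ Finset.Icc 1 J, ‖x (k - l + 1) - x (k - l)‖ * ‖Δ‖ := by
          rw [Finset.sum_mul]
      _ ≤ ∑ l ∈ Finset.Icc 1 J, (ε l * ‖x (k - l + 1) - x (k - l)‖ ^ 2 + (1 / ε l) * ‖Δ‖ ^ 2) / 2 := by
          apply Finset.sum_le_sum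
          intro l hl
          have hεl : 0 < ε l := hε l (Finset.mem_Icc.mp hl).1
          exact young_ineq _ _ _ (norm_nonneg _) (norm_nonneg _) hεl
      _ = (∑ l ∈ Finset.Icc 1 J, (ε l * ‖x (k - l + 1) - x (k - l)‖ ^ 2 + (1 / ε l) * ‖Δ‖ ^ 2)) / 2 := by
          rw [Finset.sum_div]
  -- put everything together
  have hγk := hγ k
  set D := ‖x k - xhat k‖ with hD
  set S1 := ∑ l ∈ Finset.Icc 1 k, ε l * ‖x (k - l + 1) - x (k - l)‖ ^ 2 with hS1
  set A := ∑ l ∈ Finset.Icc 1 J, ε l * ‖x (k - l + 1) - x (k - l)‖ ^ 2 with hA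
  set S2 := ∑ l ∈ Finset.Icc 1 J, 1 / ε l with hS2
  have hsplit : ∑ l ∈ Finset.Icc 1 J, (ε l * ‖x (k - l + 1) - x (k - l)‖ ^ 2 + 1 / ε l * ‖Δ‖ ^ 2)
      = A + S2 * ‖Δ‖ ^ 2 := by
    rw [Finset.sum_add_distrib, hA, hS2, Finset.sum_mul]
  rw [hsplit] at hyoung
  have hAS1 : A ≤ S1 := by
    apply Finset.sum_le_sum_of_subset_of_nonneg (Finset.Icc_subset_Icc_right hJk)
    intro l hl _
    have := hε l (Finset.mem_Icc.mp hl).1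
    positivity
  have e1 : gk i * Δ i = (gk i - hk i) * Δ i + hk i * Δ i := by ring
  have e2 : L * D * ‖Δ‖ = L * (D * ‖Δ‖) := by ring
  have h2 : L * (D * ‖Δ‖) ≤ L * ((A + S2 * ‖Δ‖ ^ 2) / 2) :=
    mul_le_mul_of_nonneg_left hyoung hL.le
  have e3 : L * ((A + S2 * ‖Δ‖ ^ 2) / 2) = L / 2 * A + L / 2 * (S2 * ‖Δ‖ ^ 2) := by ring
  have h3 : L / 2 * A ≤ L / 2 * S1 := mul_le_mul_of_nonneg_left hAS1 (by positivity)
  have hγL : L / 2 * (2 / γ k) = L / γ k := by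
    field_simp
  have expand : L / 2 * (1 + S2 - 2 / γ k) * ‖Δ‖ ^ 2
      = L / 2 * ‖Δ‖ ^ 2 + L / 2 * (S2 * ‖Δ‖ ^ 2) - L / γ k * ‖Δ‖ ^ 2 := by
    rw [← hγL]
    ring
  have hhkΔ' : hk i * Δ i = -(L / γ k * ‖Δ‖ ^ 2) := by rw [hhkΔ]; ring
  linarith [hdesc, hcross, hhkΔ', e1, e2, h2, e3, h3, expand]
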